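/- Let X be a separable real Banach space, let μ ∈ P_X be a finitely supported measure (μ ∈ F_X) and let ν ∈ P_X with ν ≠ μ. Then the Lévy–Prokhorov distance satisfies π(μ,ν) = min{ε > 0 | μ(A) ≤ ν(closure(A^ε)) + ε for all A ⊆ S_μ}; in particular the infimum defining this set is attained. -/

import Mathlib

open MeasureTheory Metric Set TopologicalSpace

/-- The (one-sided) Lévy–Prokhorov distance of two Borel probability measures. -/
noncomputable def LPdist {X : Type*} [MetricSpace X] [MeasurableSpace X]
    (μ ν : ProbabilityMeasure X) : ℝ :=
  sInf {ε : ℝ | 0 < ε ∧ ∀ A : Set X, MeasurableSet A →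
    (μ : Measure X) A ≤ (ν : Measure X) (thickening ε A) + ENNReal.ofReal ε}

/-- The s-Lévy–Prokhorov distance. -/
noncomputable def LPsdist {X : Type*} [MetricSpace X] [MeasurableSpace X]
    (s : ℝ) (μ ν : ProbabilityMeasure X) : ℝ :=
  sInf {ε : ℝ | 0 < ε ∧ ∀ A : Set X, MeasurableSet A →
    ENNReal.ofReal s * (μ : Measure X) A ≤
      ENNReal.ofReal s * (ν : Measure X) (thickening ε A) + ENNReal.ofReal ε}

/-- The support of a Borel probability measure. -/
def mSupport {X : Type*} [MetricSpace X] [MeasurableSpace X]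
    (μ : ProbabilityMeasure X) : Set X :=
  {x : X | ∀ r : ℝ, 0 < r → 0 < (μ : Measure X) (ball x r)}

/-- The Dirac measure as a probability measure. -/
noncomputable def diracPM {X : Type*} [MeasurableSpace X] (x : X) : ProbabilityMeasure X :=
  ⟨Measure.dirac x, inferInstance⟩

/-- Finitely supported probability measures: finite convex combinations of Dirac measures. -/
def IsFinitelySupported {X : Type*} [MeasurableSpace X] (μ : ProbabilityMeasure X) : Prop :=
  ∃ (s : Finset X) (w : X → ℝ), (∀ x ∈ s, 0 < w x) ∧ (∑ x ∈ s, w x = 1) ∧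
    (μ : Measure X) = ∑ x ∈ s, ENNReal.ofReal (w x) • Measure.dirac x

/-- The unit distance set of a set of probability measures. -/
def unitDistSet {X : Type*} [MetricSpace X] [MeasurableSpace X]
    (𝒜 : Set (ProbabilityMeasure X)) : Set (ProbabilityMeasure X) :=
  {ν | ∀ μ ∈ 𝒜, LPdist μ ν = 1}

/-- The witness function. -/
noncomputable def witness {X : Type*} [MetricSpace X] [MeasurableSpace X]
    (μ : ProbabilityMeasure X) (x : X) : ℝ :=
  LPdist (diracPM x) μ

/-- The s-witness function. -/
noncomputable def switness {X : Type*} [MetricSpace X] [MeasurableSpace X]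
    (s : ℝ) (μ : ProbabilityMeasure X) (x : X) : ℝ :=
  LPsdist s (diracPM x) μ

/-- Proposition 3.1: for a finitely supported `μ` and any `ν ≠ μ`, the Lévy–Prokhorov
distance is attained as the minimum of the set of `ε > 0` such that
`μ(A) ≤ ν(closure(A^ε)) + ε` for every `A ⊆ S_μ`. -/
lemma iInter_thickening_nat {X : Type*} [PseudoMetricSpace X] {δ : ℝ} (hδ : 0 ≤ δ) (A : Set X) :
    (⋂ n : ℕ, thickening (δ + 1 / (n + 1)) A) = cthickening δ A := by
  rw [cthickening_eq_iInter_thickening' hδ (Set.range fun n : ℕ => δ + 1 / (n + 1 : ℝ))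
    ?_ ?_ A, Set.biInter_range]
  · rintro x ⟨n, rfl⟩
    have : (0:ℝ) < 1 / (n + 1) := by positivity
    simpa using this
  · intro ε hε
    obtain ⟨n, hn⟩ := exists_nat_one_div_lt (sub_pos.2 hε)
    refine ⟨δ + 1 / (n + 1), ⟨n, rfl⟩, lt_add_of_pos_right δ (by positivity), by linarith⟩

theorem LPdist_isLeast {X : Type*} [NormedAddCommGroup X] [NormedSpace ℝ X]
    [CompleteSpace X] [SeparableSpace X] [MeasurableSpace X] [BorelSpace X]
    (μ ν : ProbabilityMeasure X) (hμ : IsFinitelySupported μ) (hne : ν ≠ μ) :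
    IsLeast {ε : ℝ | 0 < ε ∧ ∀ A : Set X, A ⊆ mSupport μ →
        (μ : Measure X) A ≤ (ν : Measure X) (closure (thickening ε A)) + ENNReal.ofReal ε}
      (LPdist μ ν) := by
  obtain ⟨s, w, hw_pos, hw_sum, hμ_eq⟩ := hμ
  set D := {ε : ℝ | 0 < ε ∧ ∀ A : Set X, MeasurableSet A →
    (μ : Measure X) A ≤ (ν : Measure X) (thickening ε A) + ENNReal.ofReal ε} with hD
  have hD2 : (2:ℝ) ∈ D := by
    refine ⟨two_pos, fun A _ => ?_⟩
    calc (μ : Measure X) A ≤ 1 := prob_le_one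
    _ ≤ ENNReal.ofReal 2 := by rw [ENNReal.one_le_ofReal]; norm_num
    _ ≤ _ := le_add_self
  have hDne : D.Nonempty := ⟨2, hD2⟩
  have hDbdd : BddBelow D := ⟨0, fun x hx => hx.1.le⟩
  set L := LPdist μ ν with hLdef
  have hL0 : 0 ≤ L := le_csInf hDne fun x hx => hx.1.le
  -- support facts
  have hs_subset : (↑s : Set X) ⊆ mSupport μ := by
    intro x hx r hr
    rw [hμ_eq, Measure.finset_sum_apply]
    refine lt_of_lt_of_le ?_ (Finset.single_le_sum (f := fun y =>
      (ENNReal.ofReal (w y) • Measure.dirac y) (ball x r)) (fun _ _ => zero_le) hx)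
    simp only [Measure.smul_apply, smul_eq_mul]
    rw [Measure.dirac_apply_of_mem (mem_ball_self hr)]
    simpa using ENNReal.ofReal_pos.2 (hw_pos x hx)
  have hμs : (μ : Measure X) (↑s : Set X)ᶜ = 0 := by
    rw [hμ_eq, Measure.finset_sum_apply]
    refine Finset.sum_eq_zero fun x hx => ?_
    simp only [Measure.smul_apply, smul_eq_mul]
    rw [Measure.dirac_apply' _ (s.finite_toSet.measurableSet.compl)]
    simp [hx]
  have hnull : (μ : Measure X) (mSupport μ)ᶜ = 0 :=
    measure_mono_null (compl_subset_compl.mpr hs_subset) hμs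
  have hsupp_sub : mSupport μ ⊆ ↑s := by
    intro x hx
    by_contra hxs
    obtain ⟨r, hr, hball⟩ := Metric.isOpen_iff.1 s.finite_toSet.isClosed.isOpen_compl x hxs
    exact absurd (measure_mono_null hball hμs) (hx r hr).ne'
  -- positivity of L
  have hLpos : 0 < L := by
    rcases hL0.lt_or_eq with h | h
    · exact h
    exfalso
    have hedist : levyProkhorovEDist (μ : Measure X) (ν : Measure X) = 0 := by
      refine le_antisymm ?_ zero_le
      refine levyProkhorovEDist_le_of_forall_le _ _ 0 fun ε B hε hεtop hB => ?_
      have hεR : 0 < ε.toReal := ENNReal.toReal_pos hε.ne' hεtop.ne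
      have hsInf : sInf D = L := rfl
      obtain ⟨ε', hε'D, hε'⟩ := exists_lt_of_csInf_lt hDne (show sInf D < ε.toReal by
        rw [hsInf, ← h]; exact hεR)
      calc (μ : Measure X) B ≤ (ν : Measure X) (thickening ε' B) + ENNReal.ofReal ε' :=
            hε'D.2 B hB
      _ ≤ (ν : Measure X) (thickening ε.toReal B) + ε := by
            refine add_le_add (measure_mono (thickening_mono hε'.le B)) ?_
            calc ENNReal.ofReal ε' ≤ ENNReal.ofReal ε.toReal := ENNReal.ofReal_le_ofReal hε'.le
            _ = ε := ENNReal.ofReal_toReal hεtop.ne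
    have : (μ : Measure X) = (ν : Measure X) := by
      apply ext_of_generate_finite _ ?_ isPiSystem_isClosed ?_ (by simp)
      · rw [BorelSpace.measurable_eq (α := X), borel_eq_generateFrom_isClosed]
      · intro A A_closed
        exact measure_eq_measure_of_levyProkhorovEDist_eq_zero_of_isClosed hedist A_closed
          ⟨1, one_pos, measure_ne_top _ _⟩ ⟨1, one_pos, measure_ne_top _ _⟩
    exact hne (ProbabilityMeasure.toMeasure_injective this.symm)
  constructor
  · refine ⟨hLpos, fun A hA => ?_⟩
    have hAfin : A.Finite := s.finite_toSet.subset (hA.trans hsupp_sub)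
    have hAm : MeasurableSet A := hAfin.measurableSet
    have key : ∀ n : ℕ, (μ : Measure X) A ≤
        (ν : Measure X) (thickening (L + 1 / (n + 1)) A) + ENNReal.ofReal (L + 1 / (n + 1)) := by
      intro n
      have hpos : (0:ℝ) < 1 / (n + 1) := by positivity
      have hsInf : sInf D = L := rfl
      obtain ⟨ε', hε'D, hε'⟩ := exists_lt_of_csInf_lt hDne
        (show sInf D < L + 1 / (n + 1) by rw [hsInf]; linarith)
      calc (μ : Measure X) A ≤ (ν : Measure X) (thickening ε' A) + ENNReal.ofReal ε' :=
            hε'D.2 A hAm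
      _ ≤ _ := add_le_add (measure_mono (thickening_mono hε'.le A))
            (ENNReal.ofReal_le_ofReal hε'.le)
    have htend : Filter.Tendsto (fun n : ℕ =>
        (ν : Measure X) (thickening (L + 1 / (n + 1)) A) + ENNReal.ofReal (L + 1 / (n + 1)))
        Filter.atTop (nhds ((ν : Measure X) (cthickening L A) + ENNReal.ofReal L)) := by
      refine Filter.Tendsto.add ?_ ?_
      · have := tendsto_measure_iInter_atTop (μ := (ν : Measure X))
          (s := fun n : ℕ => thickening (L + 1 / (n + 1)) A)
          (fun n => isOpen_thickening.measurableSet.nullMeasurableSet)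
          (fun m n hmn => thickening_mono (by
            have : (1:ℝ) / (n + 1) ≤ 1 / (m + 1) := by
              apply one_div_le_one_div_of_le (by positivity)
              exact_mod_cast by omega
            linarith) A) ⟨0, measure_ne_top _ _⟩
        rwa [iInter_thickening_nat hL0 A] at this
      · have h1 : Filter.Tendsto (fun n : ℕ => L + 1 / (n + 1 : ℝ)) Filter.atTop (nhds L) := by
          have := tendsto_one_div_add_atTop_nhds_zero_nat (𝕜 := ℝ)
          simpa using Filter.Tendsto.add (tendsto_const_nhds (x := L)) this
        exact (ENNReal.continuous_ofReal.tendsto L).comp h1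
    have hcth : (μ : Measure X) A ≤ (ν : Measure X) (cthickening L A) + ENNReal.ofReal L :=
      ge_of_tendsto' htend key
    refine hcth.trans (add_le_add (measure_mono ?_) le_rfl)
    rw [hAfin.isCompact.cthickening_eq_biUnion_closedBall hL0]
    refine Set.iUnion₂_subset fun x hx => ?_
    rw [← closure_ball x hLpos.ne']
    exact closure_mono (ball_subset_thickening hx L)
  · rintro ε ⟨hεpos, hεA⟩
    refine le_of_forall_pos_le_add fun δ hδ => ?_
    refine csInf_le hDbdd ⟨by linarith, fun B hB => ?_⟩
    have h1 : (μ : Measure X) B ≤ (μ : Measure X) (B ∩ mSupport μ) := by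
      calc (μ : Measure X) B ≤ (μ : Measure X) ((B ∩ mSupport μ) ∪ (mSupport μ)ᶜ) :=
            measure_mono fun x hx => by
              by_cases hs : x ∈ mSupport μ
              · exact Or.inl ⟨hx, hs⟩
              · exact Or.inr hs
      _ ≤ (μ : Measure X) (B ∩ mSupport μ) + (μ : Measure X) (mSupport μ)ᶜ := measure_union_le _ _
      _ = (μ : Measure X) (B ∩ mSupport μ) := by rw [hnull, add_zero]
    have h2 := hεA (B ∩ mSupport μ) inter_subset_right
    have h3 : closure (thickening ε (B ∩ mSupport μ)) ⊆ thickening (ε + δ) B := by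
      refine (closure_minimal (thickening_subset_cthickening _ _) isClosed_cthickening).trans ?_
      refine (cthickening_subset_thickening' (show (0:ℝ) < ε + δ by linarith)
        (show ε < ε + δ by linarith) _).trans ?_
      exact thickening_subset_of_subset _ inter_subset_left
    calc (μ : Measure X) B ≤ (μ : Measure X) (B ∩ mSupport μ) := h1
    _ ≤ (ν : Measure X) (closure (thickening ε (B ∩ mSupport μ))) + ENNReal.ofReal ε := h2
    _ ≤ (ν : Measure X) (thickening (ε + δ) B) + ENNReal.ofReal (ε + δ) :=
          add_le_add (measure_mono h3) (ENNReal.ofReal_le_ofReal (by linarith))
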